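/- Let G and H be locally compact Hausdorff maximally almost periodic groups and let T : AP(G) → AP(H) be a non-vanishing linear isometry that respects finite-dimensional unitary representations. Fix x ∈ G and let (f_n)_{n<ω} be a sequence in AP(G) such that ‖f_n‖ = |f_n(x)| for every n. Then there exists a single point y ∈ H such that ‖T f_n‖ = |(T f_n)(y)| for every n. -/

import Mathlib

open scoped BoundedContinuousFunction

noncomputable section

/-- A complex-valued function on a group is *almost periodic* if for every `ε > 0` there is a
finite cover `G = G₁ ∪ … ∪ Gₙ` with `|f (z*x*w) - f (z*y*w)| < ε` whenever `x, y` lie in a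
common member of the cover. -/
def IsAlmostPeriodic {G : Type*} [Group G] (f : G → ℂ) : Prop :=
  ∀ ε : ℝ, 0 < ε → ∃ (n : ℕ) (S : Fin n → Set G),
    (⋃ i, S i) = (Set.univ : Set G) ∧
    ∀ (i : Fin n), ∀ z w x y : G, x ∈ S i → y ∈ S i →
      ‖f (z * x * w) - f (z * y * w)‖ < ε

/-- A continuous finite-dimensional unitary representation, in matrix form. -/
def IsUnitaryRep {G : Type*} [Group G] [TopologicalSpace G] (n : ℕ)
    (D : G → Matrix (Fin n) (Fin n) ℂ) : Prop :=
  Continuous D ∧ (∀ g, D g ∈ Matrix.unitaryGroup (Fin n) ℂ) ∧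
    ∀ a b : G, D (a * b) = D a * D b

/-- Maximal almost periodicity: continuous finite-dimensional unitary representations separate
points. -/
def MAPGroup (G : Type*) [Group G] [TopologicalSpace G] : Prop :=
  ∀ ⦃x y : G⦄, x ≠ y → ∃ (n : ℕ) (D : G → Matrix (Fin n) (Fin n) ℂ),
    IsUnitaryRep n D ∧ D x ≠ D y

/-- A continuous character: a continuous homomorphism into the circle group `𝕋 ⊆ ℂ`. -/
def IsCharacter {H : Type*} [Group H] [TopologicalSpace H] (γ : H → ℂ) : Prop :=
  Continuous γ ∧ (∀ h, ‖γ h‖ = 1) ∧ ∀ a b : H, γ (a * b) = γ a * γ b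

/-- `T` respects (finite-dimensional) unitary representations: for every continuous
homomorphism `D = (d_{jk})` of `G` into `U(n)`, the matrix `(T d_{jk})` defines a continuous
homomorphism of `H` into `U(n)`. -/
def RespectsUnitaryRepsB {G H : Type*} [Group G] [TopologicalSpace G]
    [Group H] [TopologicalSpace H] (T : (G →ᵇ ℂ) → (H →ᵇ ℂ)) : Prop :=
  ∀ (n : ℕ) (d : Matrix (Fin n) (Fin n) (G →ᵇ ℂ)),
    (∀ g : G, (Matrix.of fun j k => d j k g) ∈ Matrix.unitaryGroup (Fin n) ℂ) →
    (∀ a b : G, (Matrix.of fun j k => d j k (a * b)) =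
      (Matrix.of fun j k => d j k a) * (Matrix.of fun j k => d j k b)) →
    (∀ h : H, (Matrix.of fun j k => T (d j k) h) ∈ Matrix.unitaryGroup (Fin n) ℂ) ∧
    (∀ a b : H, (Matrix.of fun j k => T (d j k) (a * b)) =
      (Matrix.of fun j k => T (d j k) a) * (Matrix.of fun j k => T (d j k) b))

/-- The Bohr topology on a topological group: the initial topology induced by the family of all
continuous finite-dimensional unitary representations. -/
def bohrTopology (G : Type*) [Group G] [TopologicalSpace G] : TopologicalSpace G :=
  ⨅ (n : ℕ) (D : {D : G → Matrix (Fin n) (Fin n) ℂ // IsUnitaryRep n D}),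
    TopologicalSpace.induced D.1 inferInstance

/-- A topological group respects compactness if every subset compact in the Bohr topology is
compact in the original topology. -/
def RespectsCompactness (G : Type*) [Group G] [TopologicalSpace G] : Prop :=
  ∀ s : Set G, @IsCompact G (bohrTopology G) s → IsCompact s

universe u
/-- A space is realcompact if it admits a closed embedding into a product of copies of `ℝ`. -/
def IsRealcompact (X : Type u) (τ : TopologicalSpace X) : Prop :=
  ∃ (ι : Type u) (f : X → ι → ℝ), @Topology.IsClosedEmbedding X (ι → ℝ) τ inferInstance f

/-! ### Auxiliary lemmas about almost periodic functions -/

lemma ap_const' {G : Type*} [Group G] (c : ℂ) : IsAlmostPeriodic (fun _ : G => c) := by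
  intro ε hε
  exact ⟨1, fun _ => Set.univ, Set.iUnion_const _, fun i z w x y _ _ => by simpa using hε⟩

lemma ap_smul' {G : Type*} [Group G] (c : ℂ) {f : G → ℂ} (hf : IsAlmostPeriodic f) :
    IsAlmostPeriodic (fun t => c * f t) := by
  intro ε hε
  obtain ⟨n, S, hSu, hS⟩ := hf (ε / (‖c‖ + 1)) (by positivity)
  refine ⟨n, S, hSu, fun i z w x y hx hy => ?_⟩
  have h := hS i z w x y hx hy
  have habs : ‖c * f (z*x*w) - c * f (z*y*w)‖
      = ‖c‖ * ‖f (z*x*w) - f (z*y*w)‖ := by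
    rw [← mul_sub, norm_mul]
  rw [habs]
  have h1 : ‖c‖ * ‖f (z*x*w) - f (z*y*w)‖
      ≤ ‖c‖ * (ε / (‖c‖ + 1)) :=
    mul_le_mul_of_nonneg_left h.le (norm_nonneg c)
  have h2 : ‖c‖ * (ε / (‖c‖ + 1)) < ε := by
    rw [mul_div_assoc'] at *
    rw [div_lt_iff₀ (by positivity)]
    nlinarith [norm_nonneg c]
  linarith

lemma ap_add' {G : Type*} [Group G] {f g : G → ℂ} (hf : IsAlmostPeriodic f)
    (hg : IsAlmostPeriodic g) : IsAlmostPeriodic (fun t => f t + g t) := by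
  intro ε hε
  obtain ⟨n, S, hSu, hS⟩ := hf (ε/2) (by positivity)
  obtain ⟨m, S', hS'u, hS'⟩ := hg (ε/2) (by positivity)
  refine ⟨m * n, fun i => S (finProdFinEquiv.symm i).2 ∩ S' (finProdFinEquiv.symm i).1, ?_, ?_⟩
  · ext t
    simp only [Set.mem_iUnion, Set.mem_univ, iff_true]
    have h1 : t ∈ ⋃ i, S i := by rw [hSu]; trivial
    have h2 : t ∈ ⋃ i, S' i := by rw [hS'u]; trivial
    obtain ⟨i, hi⟩ := Set.mem_iUnion.1 h1
    obtain ⟨j, hj⟩ := Set.mem_iUnion.1 h2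
    exact ⟨finProdFinEquiv (j, i), by simp [hi, hj]⟩
  · intro i z w x y hx hy
    have h1 := hS _ z w x y hx.1 hy.1
    have h2 := hS' _ z w x y hx.2 hy.2
    have key : (f (z*x*w) + g (z*x*w)) - (f (z*y*w) + g (z*y*w))
        = (f (z*x*w) - f (z*y*w)) + (g (z*x*w) - g (z*y*w)) := by ring
    rw [key]
    calc ‖_‖ ≤ _ + _ := norm_add_le _ _
      _ < ε/2 + ε/2 := add_lt_add h1 h2
      _ = ε := by ring

lemma ap_limit' {G : Type*} [Group G] [TopologicalSpace G] {f : G →ᵇ ℂ}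
    (h : ∀ ε : ℝ, 0 < ε → ∃ g : G →ᵇ ℂ, IsAlmostPeriodic ⇑g ∧ ‖f - g‖ < ε) :
    IsAlmostPeriodic ⇑f := by
  intro ε hε
  obtain ⟨g, hg, hfg⟩ := h (ε/3) (by positivity)
  obtain ⟨n, S, hSu, hS⟩ := hg (ε/3) (by positivity)
  refine ⟨n, S, hSu, fun i z w x y hx hy => ?_⟩
  have h1 : ∀ a : G, ‖f a - g a‖ ≤ ‖f - g‖ := fun a => by
    simpa using BoundedContinuousFunction.norm_coe_le_norm (f - g) a
  have h2 := hS i z w x y hx hy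
  set a := z*x*w; set b := z*y*w
  have key : f a - f b = (f a - g a) + ((g a - g b) + (g b - f b)) := by ring
  have e1 := h1 a
  have e2 := h1 b
  have e2' : ‖g b - f b‖ ≤ ‖f - g‖ := by rwa [norm_sub_rev] at e2
  calc ‖f a - f b‖ ≤ ‖f a - g a‖
        + ‖(g a - g b) + (g b - f b)‖ := by rw [key]; exact norm_add_le _ _
    _ ≤ ‖f a - g a‖ + (‖g a - g b‖ + ‖g b - f b‖) := by
        gcongr; exact norm_add_le _ _
    _ < ε/3 + (ε/3 + ε/3) := by
        apply add_lt_add_of_le_of_lt (le_trans e1 hfg.le)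
        exact add_lt_add_of_lt_of_le h2 (le_trans e2' hfg.le)
    _ = ε := by ring

lemma unitary_one_entry_abs (M : Matrix (Fin 1) (Fin 1) ℂ)
    (h : M ∈ Matrix.unitaryGroup (Fin 1) ℂ) : ‖M 0 0‖ = 1 := by
  have h1 : star M * M = 1 := h.1
  have h2 : (star M * M) 0 0 = (1 : Matrix (Fin 1) (Fin 1) ℂ) 0 0 := by rw [h1]
  simp [Matrix.mul_apply, Matrix.one_apply, Matrix.star_apply] at h2
  have h3 : Complex.normSq (M 0 0) = 1 := by
    have := Complex.mul_conj (M 0 0)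
    rw [mul_comm] at this
    rw [this] at h2
    exact_mod_cast h2
  have h4 : ‖M 0 0‖ ^ 2 = 1 := by rw [Complex.sq_norm]; exact h3
  nlinarith [norm_nonneg (M 0 0)]

lemma conj_div_abs_mul (z : ℂ) (hz : z ≠ 0) :
    (starRingEnd ℂ) z / (‖z‖ : ℂ) * z = ‖z‖ := by
  have h0 : (‖z‖ : ℂ) ≠ 0 := by simpa using (norm_ne_zero_iff.mpr hz)
  field_simp
  rw [mul_comm, Complex.mul_conj, Complex.normSq_eq_norm_sq]
  push_cast
  ring

/-- Let `G`, `H` be locally compact Hausdorff maximally almost periodic groups and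
`T : AP(G) → AP(H)` a non-vanishing linear isometry respecting finite-dimensional unitary
representations. If `x ∈ G` and `(fₙ)` is a sequence in `AP(G)` with `‖fₙ‖ = |fₙ x|` for every
`n`, then there is a single `y ∈ H` with `‖T fₙ‖ = |(T fₙ) y|` for every `n`. -/
theorem exists_common_norm_attaining_point
    {G H : Type u} [Group G] [TopologicalSpace G] [IsTopologicalGroup G]
    [LocallyCompactSpace G] [T2Space G]
    [Group H] [TopologicalSpace H] [IsTopologicalGroup H]
    [LocallyCompactSpace H] [T2Space H]
    (hGmap : MAPGroup G) (hHmap : MAPGroup H)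
    (T : (G →ᵇ ℂ) → (H →ᵇ ℂ))
    (hTap : ∀ f : G →ᵇ ℂ, IsAlmostPeriodic ⇑f → IsAlmostPeriodic ⇑(T f))
    (hTadd : ∀ f g : G →ᵇ ℂ, IsAlmostPeriodic ⇑f → IsAlmostPeriodic ⇑g →
      T (f + g) = T f + T g)
    (hTsmul : ∀ (c : ℂ) (f : G →ᵇ ℂ), IsAlmostPeriodic ⇑f → T (c • f) = c • T f)
    (hTiso : ∀ f : G →ᵇ ℂ, IsAlmostPeriodic ⇑f → ‖T f‖ = ‖f‖)
    (hTnv : ∀ f : G →ᵇ ℂ, IsAlmostPeriodic ⇑f →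
      ((∀ y : H, T f y ≠ 0) ↔ ∀ x : G, f x ≠ 0))
    (hTrep : RespectsUnitaryRepsB T)
    (x : G) (f : ℕ → (G →ᵇ ℂ))
    (hfap : ∀ n : ℕ, IsAlmostPeriodic ⇑(f n))
    (hfx : ∀ n : ℕ, ‖f n‖ = ‖f n x‖) :
    ∃ y : H, ∀ n : ℕ, ‖T (f n)‖ = ‖T (f n) y‖ := by
  classical
  -- bundled almost-periodicity closure facts
  have apcoe_smul : ∀ (c : ℂ) (v : G →ᵇ ℂ), IsAlmostPeriodic ⇑v →
      IsAlmostPeriodic ⇑(c • v) := by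
    intro c v hv
    have e : ⇑(c • v) = fun t => c * v t := by ext t; simp
    rw [e]; exact ap_smul' c hv
  have apcoe_add : ∀ v w : G →ᵇ ℂ, IsAlmostPeriodic ⇑v → IsAlmostPeriodic ⇑w →
      IsAlmostPeriodic ⇑(v + w) := by
    intro v w hv hw
    have e : ⇑(v + w) = fun t => v t + w t := by ext t; simp
    rw [e]; exact ap_add' hv hw
  have ap_one : IsAlmostPeriodic ⇑(1 : G →ᵇ ℂ) := by
    have e : ⇑(1 : G →ᵇ ℂ) = fun _ : G => (1:ℂ) := by ext t; simp
    rw [e]; exact ap_const' 1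
  have ap_zero : IsAlmostPeriodic ⇑(0 : G →ᵇ ℂ) := by
    have e : ⇑(0 : G →ᵇ ℂ) = fun _ : G => (0:ℂ) := by ext t; simp
    rw [e]; exact ap_const' 0
  have apcoe_sub : ∀ v w : G →ᵇ ℂ, IsAlmostPeriodic ⇑v → IsAlmostPeriodic ⇑w →
      IsAlmostPeriodic ⇑(v - w) := by
    intro v w hv hw
    have e : v - w = v + (-1:ℂ) • w := by
      ext t; simp [sub_eq_add_neg]
    rw [e]; exact apcoe_add _ _ hv (apcoe_smul _ _ hw)
  have hT0 : T 0 = 0 := by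
    have h := hTsmul 0 0 ap_zero
    simpa using h
  -- |T1| ≡ 1 from respecting the trivial 1-dimensional representation
  have hT1_abs : ∀ h : H, ‖T 1 h‖ = 1 := by
    intro h
    have hrep := hTrep 1 (fun _ _ => (1 : G →ᵇ ℂ)) ?_ ?_
    · have h2 := hrep.1 h
      have h3 := unitary_one_entry_abs _ h2
      simpa using h3
    · intro g
      have e : (Matrix.of fun _ _ : Fin 1 => (1 : G →ᵇ ℂ) g) = 1 := by
        ext i j; fin_cases i; fin_cases j; simp [Matrix.one_apply]
      rw [e]; exact Submonoid.one_mem _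
    · intro a b
      have e : ∀ t : G, (Matrix.of fun _ _ : Fin 1 => (1 : G →ᵇ ℂ) t) = 1 := by
        intro t; ext i j; fin_cases i; fin_cases j; simp [Matrix.one_apply]
      rw [e, e, e, one_mul]
  -- scalar data
  set cn : ℕ → ℝ := fun n => max ‖f n‖ 1 with hcn
  have hcn_pos : ∀ n, 0 < cn n := fun n => lt_of_lt_of_le one_pos (le_max_right _ _)
  set lam : ℕ → ℂ := fun n =>
    if f n x = 0 then 1 else (starRingEnd ℂ) (f n x) / (‖f n x‖ : ℂ) with hlam
  have hlam_abs : ∀ n, ‖lam n‖ = 1 := by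
    intro n
    by_cases h : f n x = 0
    · simp [hlam, h]
    · have h0 : ‖f n x‖ ≠ 0 := norm_ne_zero_iff.mpr h
      simp only [hlam, if_neg h]
      rw [norm_div, Complex.norm_conj, Complex.norm_real, Real.norm_eq_abs,
        abs_of_nonneg (norm_nonneg _), div_self h0]
  have hlam_mul : ∀ n, lam n * f n x = (‖f n x‖ : ℂ) := by
    intro n
    by_cases h : f n x = 0
    · simp [hlam, h]
    · simp only [hlam, if_neg h]
      exact conj_div_abs_mul _ h
  set r : ℕ → ℝ := fun n => (1/2:ℝ)^n * ‖f n‖ / cn n with hr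
  have hr_nonneg : ∀ n, 0 ≤ r n := fun n =>
    div_nonneg (mul_nonneg (by positivity) (norm_nonneg _)) (hcn_pos n).le
  have hr_le : ∀ n, r n ≤ (1/2:ℝ)^n := by
    intro n
    simp only [hr]
    rw [div_le_iff₀ (hcn_pos n)]
    have h1 : ‖f n‖ ≤ cn n := le_max_left _ _
    nlinarith [pow_nonneg (by norm_num : (0:ℝ) ≤ 1/2) n, (hcn_pos n).le]
  set al : ℕ → ℂ := fun n => (((1/2:ℝ)^n / cn n : ℝ) : ℂ) * lam n with hal
  have hal_abs : ∀ n, ‖al n‖ = (1/2:ℝ)^n / cn n := by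
    intro n
    simp only [hal]
    rw [norm_mul, hlam_abs, mul_one, Complex.norm_real, Real.norm_eq_abs,
      abs_of_nonneg (div_nonneg (by positivity) (hcn_pos n).le)]
  have hal_ne : ∀ n, al n ≠ 0 := by
    intro n h
    have h2 := hal_abs n
    rw [h, norm_zero] at h2
    have hpos : 0 < (1/2:ℝ)^n / cn n := div_pos (by positivity) (hcn_pos n)
    linarith
  set g : ℕ → (G →ᵇ ℂ) := fun n => al n • f n with hgdef
  have hgap : ∀ n, IsAlmostPeriodic ⇑(g n) := fun n => apcoe_smul _ _ (hfap n)
  have hg_norm : ∀ n, ‖g n‖ = r n := by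
    intro n
    simp only [hgdef, hr]
    rw [norm_smul, hal_abs]
    ring
  have hg_norm_le : ∀ n, ‖g n‖ ≤ (1/2:ℝ)^n := fun n => (hg_norm n) ▸ hr_le n
  have hg_x : ∀ n, g n x = (r n : ℂ) := by
    intro n
    have e : g n x = al n * f n x := by simp [hgdef]
    rw [e]
    simp only [hal, hr]
    rw [mul_assoc, hlam_mul, show ‖f n x‖ = ‖f n‖ from (hfx n).symm]
    push_cast
    ring
  have hsum_g : Summable g := Summable.of_norm_bounded summable_geometric_two hg_norm_le
  have hsum_r : Summable r := Summable.of_nonneg_of_le hr_nonneg hr_le summable_geometric_two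
  set F : G →ᵇ ℂ := ∑' n, g n with hFdef
  set c : ℝ := ∑' n, r n with hcdef
  have hc_nonneg : 0 ≤ c := tsum_nonneg hr_nonneg
  have hFx : F x = (c : ℂ) := by
    have e1 : F x = ∑' n, g n x := (BoundedContinuousFunction.evalCLM ℂ x).map_tsum hsum_g
    have e2 : ((c:ℝ):ℂ) = ∑' n, ((r n : ℝ):ℂ) := Complex.ofRealCLM.map_tsum hsum_r
    rw [e1, e2]
    exact tsum_congr hg_x
  set S : ℕ → (G →ᵇ ℂ) := fun N => ∑ k ∈ Finset.range N, g k with hSdef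
  have hSap : ∀ N, IsAlmostPeriodic ⇑(S N) := by
    intro N
    induction N with
    | zero => simpa [hSdef] using ap_zero
    | succ N ih =>
        have e : S (N+1) = S N + g N := by simp [hSdef, Finset.sum_range_succ]
        rw [e]; exact apcoe_add _ _ ih (hgap N)
  have hFtend : Filter.Tendsto S Filter.atTop (nhds F) := hsum_g.hasSum.tendsto_sum_nat
  have hFap : IsAlmostPeriodic ⇑F := by
    apply ap_limit'
    intro ε hε
    obtain ⟨N, hN⟩ := (Metric.tendsto_atTop.1 hFtend) ε hε
    refine ⟨S N, hSap N, ?_⟩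
    have h2 := hN N le_rfl
    rwa [dist_eq_norm, norm_sub_rev] at h2
  have hTS : ∀ N, T (S N) = ∑ k ∈ Finset.range N, T (g k) := by
    intro N
    induction N with
    | zero => simpa [hSdef] using hT0
    | succ N ih =>
        have e : S (N+1) = S N + g N := by simp [hSdef, Finset.sum_range_succ]
        rw [e, hTadd _ _ (hSap N) (hgap N), ih, Finset.sum_range_succ]
  have hTdiff : ∀ N, ‖T F - T (S N)‖ = ‖F - S N‖ := by
    intro N
    have e : F = S N + (F - S N) := by abel
    have h1 : T F = T (S N) + T (F - S N) := by
      conv_lhs => rw [e]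
      exact hTadd _ _ (hSap N) (apcoe_sub _ _ hFap (hSap N))
    rw [show T F - T (S N) = T (F - S N) by rw [h1]; abel]
    exact hTiso _ (apcoe_sub _ _ hFap (hSap N))
  have hTFtend : Filter.Tendsto (fun N => T (S N)) Filter.atTop (nhds (T F)) := by
    rw [Metric.tendsto_atTop]
    intro ε hε
    obtain ⟨N, hN⟩ := Metric.tendsto_atTop.1 hFtend ε hε
    refine ⟨N, fun n hn => ?_⟩
    have h2 := hN n hn
    rw [dist_eq_norm, norm_sub_rev] at h2 ⊢
    rw [hTdiff]
    exact h2
  by_cases hczero : c = 0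
  · -- degenerate case: all fₙ = 0
    have hfzero : ∀ n, f n = 0 := by
      intro n
      have h1 : r n ≤ c := hsum_r.le_tsum n (fun m _ => hr_nonneg m)
      have h2 : r n = 0 := le_antisymm (hczero ▸ h1) (hr_nonneg n)
      simp only [hr] at h2
      rw [div_eq_zero_iff] at h2
      rcases h2 with h2 | h2
      · rcases mul_eq_zero.1 h2 with h3 | h3
        · exact absurd h3 (by positivity)
        · exact norm_eq_zero.1 h3
      · exact absurd h2 (hcn_pos n).ne'
    refine ⟨1, fun n => ?_⟩
    rw [hfzero n, hT0]
    simp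
  · have hc_pos : 0 < c := lt_of_le_of_ne hc_nonneg (Ne.symm hczero)
    set u : G →ᵇ ℂ := (c:ℂ) • 1 + (-1:ℂ) • F with hudef
    have hu_ap : IsAlmostPeriodic ⇑u :=
      apcoe_add _ _ (apcoe_smul _ _ ap_one) (apcoe_smul _ _ hFap)
    have hu_x : u x = 0 := by
      simp only [hudef]
      simp [hFx]
    have hy : ∃ y : H, T u y = 0 := by
      by_contra hcon
      push_neg at hcon
      exact ((hTnv u hu_ap).1 hcon) x hu_x
    obtain ⟨y, hy0⟩ := hy
    have hTu : T u = (c:ℂ) • T 1 + (-1:ℂ) • T F := by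
      rw [hudef, hTadd _ _ (apcoe_smul _ _ ap_one) (apcoe_smul _ _ hFap),
        hTsmul _ _ ap_one, hTsmul _ _ hFap]
    have h2 : (0:ℂ) = (c:ℂ) * T 1 y + (-1) * T F y := by
      rw [← hy0, hTu]; simp
    have hTFy : T F y = (c:ℂ) * T 1 y := by linear_combination h2
    have hTFy_abs : ‖T F y‖ = c := by
      rw [hTFy, norm_mul, hT1_abs y, mul_one, Complex.norm_real, Real.norm_eq_abs, abs_of_nonneg hc_nonneg]
    set b : ℕ → ℂ := fun n => T (g n) y with hbdef
    have hb_abs_le : ∀ n, ‖b n‖ ≤ r n := by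
      intro n
      have h1 : ‖T (g n) y‖ ≤ ‖T (g n)‖ := BoundedContinuousFunction.norm_coe_le_norm _ _
      rw [hTiso _ (hgap n), hg_norm] at h1
      simpa [hbdef] using h1
    have hsum_b : Summable b := by
      apply Summable.of_norm_bounded hsum_r
      intro n; simpa using hb_abs_le n
    have hTFy_sum : T F y = ∑' n, b n := by
      have h1 : Filter.Tendsto (fun N => T (S N) y) Filter.atTop (nhds (T F y)) := by
        rw [Metric.tendsto_atTop] at hTFtend ⊢
        intro ε hε
        obtain ⟨N, hN⟩ := hTFtend ε hε
        exact ⟨N, fun n hn =>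
          lt_of_le_of_lt (BoundedContinuousFunction.dist_coe_le_dist y) (hN n hn)⟩
      have h2 : ∀ N, T (S N) y = ∑ k ∈ Finset.range N, b k := by
        intro N
        rw [hTS N]
        exact map_sum (BoundedContinuousFunction.evalCLM ℂ y) _ _
      have h3 : Filter.Tendsto (fun N => ∑ k ∈ Finset.range N, b k) Filter.atTop
          (nhds (T F y)) := h1.congr h2
      exact tendsto_nhds_unique h3 hsum_b.hasSum.tendsto_sum_nat
    have habs_sum : Summable (fun n => ‖b n‖) :=
      Summable.of_nonneg_of_le (fun n => norm_nonneg _) hb_abs_le hsum_r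
    have hge : c ≤ ∑' n, ‖b n‖ := by
      rw [← hTFy_abs, hTFy_sum]
      have h1 := norm_tsum_le_tsum_norm (f := b) (by simpa using habs_sum)
      simpa using h1
    have hkey : ∀ n, ‖b n‖ = r n := by
      intro n
      by_contra hne
      have hlt : ‖b n‖ < r n := lt_of_le_of_ne (hb_abs_le n) hne
      have h1 := Summable.tsum_lt_tsum hb_abs_le hlt habs_sum hsum_r
      rw [← hcdef] at h1
      linarith
    refine ⟨y, fun n => ?_⟩
    have h1 : ‖b n‖ = r n := hkey n
    have h2 : T (g n) = al n • T (f n) := by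
      simp only [hgdef]
      exact hTsmul (al n) (f n) (hfap n)
    have h3 : ‖b n‖ = ‖al n‖ * ‖T (f n) y‖ := by
      simp only [hbdef]
      rw [h2]
      simp [map_mul]
    have h4 : r n = ‖al n‖ * ‖T (f n)‖ := by
      rw [← hg_norm n, ← hTiso _ (hgap n), h2, norm_smul]
    rw [h3, h4] at h1
    have h5 : ‖al n‖ ≠ 0 := by
      simpa using hal_ne n
    exact (mul_left_cancel₀ h5 h1).symm

end
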